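/- Every countable Pytkeev network in a topological space X is a k-network for X. -/

import Mathlib

open Set Filter Topology TopologicalSpace

/-- A set `A` accumulates at `x` if every neighborhood of `x` contains
infinitely many points of `A`. -/
def AccumulatesAt {X : Type*} [TopologicalSpace X] (A : Set X) (x : X) : Prop :=
  ∀ U ∈ 𝓝 x, (U ∩ A).Infinite

/-- `𝒩` is a network: for each point and open neighborhood there is a member of `𝒩`
containing the point and contained in the neighborhood. -/
def IsNetwork {X : Type*} [TopologicalSpace X] (𝒩 : Set (Set X)) : Prop :=
  ∀ (x : X) (U : Set X), IsOpen U → x ∈ U → ∃ N ∈ 𝒩, x ∈ N ∧ N ⊆ U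

/-- `𝒩` is a Pytkeev network. -/
def IsPytkeevNetwork {X : Type*} [TopologicalSpace X] (𝒩 : Set (Set X)) : Prop :=
  IsNetwork 𝒩 ∧ ∀ (x : X) (U : Set X), IsOpen U → x ∈ U →
    ∀ A : Set X, AccumulatesAt A x → ∃ N ∈ 𝒩, N ⊆ U ∧ (N ∩ A).Infinite

/-- `𝒩` is a k-network. -/
def IsKNetwork {X : Type*} [TopologicalSpace X] (𝒩 : Set (Set X)) : Prop :=
  ∀ (U K : Set X), IsOpen U → IsCompact K → K ⊆ U →
    ∃ F ⊆ 𝒩, F.Finite ∧ K ⊆ ⋃₀ F ∧ ⋃₀ F ⊆ U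

/-- Every countable Pytkeev network in a topological space is a k-network. -/
theorem countable_pytkeevNetwork_isKNetwork {X : Type*} [TopologicalSpace X]
    (𝒩 : Set (Set X)) (hc : 𝒩.Countable) (h : IsPytkeevNetwork 𝒩) :
    IsKNetwork 𝒩 := by
  intro U K hU hK hKU
  rcases K.eq_empty_or_nonempty with rfl | hKne
  · exact ⟨∅, empty_subset _, finite_empty, by simp, by simp⟩
  set 𝒩' : Set (Set X) := {N ∈ 𝒩 | N ⊆ U} with h𝒩'def
  have h𝒩'c : 𝒩'.Countable := hc.mono (sep_subset _ _)
  have h𝒩'ne : 𝒩'.Nonempty := by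
    obtain ⟨z, hz⟩ := hKne
    obtain ⟨N, hN, _, hNU⟩ := h.1 z U hU (hKU hz)
    exact ⟨N, hN, hNU⟩
  obtain ⟨f, hf⟩ := h𝒩'c.exists_eq_range h𝒩'ne
  have hfmem : ∀ i, f i ∈ 𝒩 ∧ f i ⊆ U := by
    intro i
    have : f i ∈ 𝒩' := hf ▸ mem_range_self i
    exact this
  by_contra hcon
  push_neg at hcon
  have hstep : ∀ n : ℕ, ∃ z ∈ K, ∀ i ≤ n, z ∉ f i := by
    intro n
    by_contra hx
    push_neg at hx
    refine hcon (f '' (Iic n)) ?_ ((finite_Iic n).image f) ?_ ?_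
    · rintro _ ⟨i, -, rfl⟩; exact (hfmem i).1
    · intro z hz
      obtain ⟨i, hi, hzi⟩ := hx z hz
      exact ⟨f i, ⟨i, hi, rfl⟩, hzi⟩
    · rintro y ⟨_, ⟨i, -, rfl⟩, hy⟩
      exact (hfmem i).2 hy
  choose x hxK hxf using hstep
  set A : Set X := range x with hAdef
  have hAK : A ⊆ K := by rintro _ ⟨n, rfl⟩; exact hxK n
  have hAinf : A.Infinite := by
    intro hA
    have hg : ∀ y ∈ A, ∃ m, y ∈ f m := by
      intro y hy
      obtain ⟨N, hN, hyN, hNU⟩ := h.1 y U hU (hKU (hAK hy))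
      have : N ∈ range f := hf ▸ (show N ∈ 𝒩' from ⟨hN, hNU⟩)
      obtain ⟨m, rfl⟩ := this
      exact ⟨m, hyN⟩
    choose! g hgm using hg
    set M := hA.toFinset.sup g with hM
    have hxMA : x M ∈ A := mem_range_self M
    have hle : g (x M) ≤ M := Finset.le_sup (hA.mem_toFinset.mpr hxMA)
    exact hxf M (g (x M)) hle (hgm _ hxMA)
  have hacc : ∃ z ∈ K, AccumulatesAt A z := by
    by_contra hno
    push_neg at hno
    have hV : ∀ z ∈ K, ∃ V ∈ 𝓝 z, ¬ (V ∩ A).Infinite := by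
      intro z hz
      have := hno z hz
      unfold AccumulatesAt at this
      push_neg at this
      obtain ⟨W, hW, hWf⟩ := this
      exact ⟨W, hW, not_infinite.mpr hWf⟩
    choose! V hVnhds hVfin using hV
    obtain ⟨t, htK, htcov⟩ := hK.elim_nhds_subcover V (fun z hz => hVnhds z hz)
    have : A.Finite := by
      have hsub : A ⊆ ⋃ z ∈ t, (V z ∩ A) := by
        intro y hy
        obtain ⟨z, hz, hyz⟩ := mem_iUnion₂.mp (htcov (hAK hy))
        exact mem_iUnion₂.mpr ⟨z, hz, hyz, hy⟩
      exact (t.finite_toSet.biUnion fun z hz =>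
        not_infinite.mp (hVfin z (htK z hz))).subset hsub
    exact hAinf this
  obtain ⟨z, hzK, hzacc⟩ := hacc
  obtain ⟨N, hN, hNU, hNA⟩ := h.2 z U hU (hKU hzK) A hzacc
  have : N ∈ range f := hf ▸ (show N ∈ 𝒩' from ⟨hN, hNU⟩)
  obtain ⟨k, rfl⟩ := this
  have hsub : f k ∩ A ⊆ x '' (Iio k) := by
    rintro y ⟨hyf, n, rfl⟩
    rcases lt_or_ge n k with hnk | hkn
    · exact ⟨n, hnk, rfl⟩
    · exact absurd hyf (hxf n k hkn)
  exact hNA (((finite_Iio k).image x).subset hsub)
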